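/- arXiv:2506.21286 — 4 statements merged into one kernel-verified Lean document; each statement's English description precedes it below -/
import Mathlib

section
/- Let G be an r-regular, r-edge-colorable graph such that for every set S of r−1 edges of G, the graph obtained from G by deleting all endpoints of edges in S has the same independence number as G. Then the line hypergraph L(G) is an r-partite r-uniform hypergraph with the property that for every set T of r−1 vertices of L(G), deleting T from L(G) does not decrease the matching number; in particular L(G) is a counterexample to Lovász' conjecture. -/
/-- The independence number of a graph. -/
noncomputable def indepNum {V : Type*} (G : SimpleGraph V) : ℕ :=
  sSup {m | ∃ I : Finset V, (∀ u ∈ I, ∀ v ∈ I, ¬ G.Adj u v) ∧ I.card = m}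

/-- The independence number of the subgraph of `G` induced on the vertex set `s`. -/
noncomputable def indepNumOn {V : Type*} (G : SimpleGraph V) (s : Set V) : ℕ :=
  sSup {m | ∃ I : Finset V, ↑I ⊆ s ∧ (∀ u ∈ I, ∀ v ∈ I, ¬ G.Adj u v) ∧ I.card = m}

/-- `G` is `r`-edge-colorable. -/
def EdgeColorable {V : Type*} (G : SimpleGraph V) (r : ℕ) : Prop :=
  ∃ C : Sym2 V → Fin r, ∀ e ∈ G.edgeSet, ∀ f ∈ G.edgeSet,
    e ≠ f → (∃ v, v ∈ e ∧ v ∈ f) → C e ≠ C f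

/-- The matching number of the line hypergraph `L(G)` whose hyperedges are the
incidence sets `S(v) = G.incidenceSet v`. -/
noncomputable def lineNu {V : Type*} (G : SimpleGraph V) : ℕ :=
  sSup {m | ∃ M : Finset (Set (Sym2 V)),
    (∀ A ∈ M, ∃ v : V, A = G.incidenceSet v) ∧
    ((M : Set (Set (Sym2 V))).Pairwise fun A B => Disjoint A B) ∧ M.card = m}

/-- The matching number of the line hypergraph `L(G)` after deleting the vertex set `T`
(of `L(G)`, i.e. a set of edges of `G`): only hyperedges containing no member of `T`
survive. -/
noncomputable def lineNuDel {V : Type*} (G : SimpleGraph V) (T : Set (Sym2 V)) : ℕ :=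
  sSup {m | ∃ M : Finset (Set (Sym2 V)),
    (∀ A ∈ M, ∃ v : V, A = G.incidenceSet v ∧ ∀ e ∈ T, e ∉ A) ∧
    ((M : Set (Set (Sym2 V))).Pairwise fun A B => Disjoint A B) ∧ M.card = m}

/-- If `G` is `r`-regular, `r`-edge-colorable, and for every set `S` of `r−1` edges
removing all endpoints of edges of `S` does not change the independence number, then the
line hypergraph `L(G)` is `r`-partite and `r`-uniform, and for every set `T` of `r−1`
of its vertices, deleting `T` does not decrease the matching number — so `L(G)` is a
counterexample to Lovász' conjecture. -/
theorem lineHypergraph_counterexample_of_indepNum_stable {V : Type*} [Fintype V]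
    (G : SimpleGraph V) (r : ℕ)
    (hreg : ∀ v : V, (G.neighborSet v).ncard = r)
    (hcol : EdgeColorable G r)
    (hstable : ∀ S : Finset (Sym2 V), ↑S ⊆ G.edgeSet → S.card = r - 1 →
      indepNumOn G {v : V | ∀ e ∈ S, v ∉ e} = indepNum G) :
    (∃ F : Sym2 V → Fin r, ∀ v : V, ∀ c : Fin r,
        ∃! e : Sym2 V, e ∈ G.incidenceSet v ∧ F e = c) ∧
    (∀ v : V, (G.incidenceSet v).ncard = r) ∧
    (∀ T : Finset (Sym2 V), ↑T ⊆ G.edgeSet → T.card = r - 1 →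
      lineNuDel G ↑T = lineNu G) := by
  classical
  have hmem : ∀ (v : V) (e : Sym2 V), e ∈ G.incidenceSet v ↔ e ∈ G.edgeSet ∧ v ∈ e :=
    fun v e => Iff.rfl
  have hcard : ∀ v : V, (G.incidenceSet v).ncard = r := by
    intro v
    rw [← Nat.card_coe_set_eq, Nat.card_congr (G.incidenceSetEquivNeighborSet v),
      Nat.card_coe_set_eq, hreg v]
  obtain ⟨C, hC⟩ := hcol
  refine ⟨⟨C, ?_⟩, hcard, ?_⟩
  · -- r-partiteness
    intro v c
    haveI : Fintype (G.incidenceSet v) := (Set.toFinite _).fintype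
    have hcardF : Fintype.card (G.incidenceSet v) = r := by
      rw [← Nat.card_eq_fintype_card, Nat.card_coe_set_eq, hcard v]
    set g : G.incidenceSet v → Fin r := fun e => C e with hg
    have hinj : Function.Injective g := by
      rintro ⟨e, he⟩ ⟨f, hf⟩ h
      by_contra hne
      have hef : e ≠ f := fun h' => hne (Subtype.ext h')
      exact hC e ((hmem v e).mp he).1 f ((hmem v f).mp hf).1 hef
        ⟨v, ((hmem v e).mp he).2, ((hmem v f).mp hf).2⟩ h
    have hbij : Function.Bijective g :=
      (Fintype.bijective_iff_injective_and_card g).mpr ⟨hinj, by simp [hcardF]⟩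
    obtain ⟨⟨e, he⟩, hge⟩ := hbij.2 c
    refine ⟨e, ⟨he, hge⟩, ?_⟩
    rintro f ⟨hf, hfc⟩
    have : (⟨f, hf⟩ : G.incidenceSet v) = ⟨e, he⟩ :=
      hinj (show g ⟨f, hf⟩ = g ⟨e, he⟩ from hfc.trans hge.symm)
    exact congrArg Subtype.val this
  · -- matching numbers
    intro T hT hTcard
    rcases Nat.lt_or_ge r 2 with hr | hr
    · -- trivial case : T = ∅
      have hTe : T = ∅ := Finset.card_eq_zero.mp (by omega)
      subst hTe
      unfold lineNuDel lineNu
      congr 1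
      ext m
      simp
    · -- main case
      haveI : Fintype (Sym2 V) := inferInstance
      have bddNu : ∀ P : Set (Sym2 V) → Prop, BddAbove {m | ∃ M : Finset (Set (Sym2 V)),
          (∀ A ∈ M, P A) ∧
          ((M : Set (Set (Sym2 V))).Pairwise fun A B => Disjoint A B) ∧ M.card = m} := by
        intro P
        exact ⟨Fintype.card (Set (Sym2 V)), by rintro m ⟨M, -, -, rfl⟩; exact M.card_le_univ⟩
      have bddI : BddAbove {m | ∃ I : Finset V,
          (∀ u ∈ I, ∀ v ∈ I, ¬ G.Adj u v) ∧ I.card = m} :=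
        ⟨Fintype.card V, by rintro m ⟨I, -, rfl⟩; exact I.card_le_univ⟩
      have hinc_inj : Function.Injective G.incidenceSet := by
        intro u v h
        by_contra hne
        have h2 : 1 < (G.neighborSet u).ncard := by rw [hreg]; omega
        obtain ⟨w1, hw1, w2, hw2, hne12⟩ := (Set.one_lt_ncard (Set.toFinite _)).mp h2
        have key : ∀ w, w ∈ G.neighborSet u → v = w := by
          intro w hw
          have hadj : G.Adj u w := hw
          have hin : s(u, w) ∈ G.incidenceSet u :=
            (hmem u _).mpr ⟨G.mem_edgeSet.mpr hadj, by simp⟩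
          have hv : v ∈ s(u, w) := ((hmem v _).mp (h ▸ hin)).2
          rcases Sym2.mem_iff.mp hv with h' | h'
          · exact absurd h'.symm hne
          · exact h'
        exact hne12 ((key w1 hw1).symm.trans (key w2 hw2))
      -- lineNuDel ≤ lineNu
      have h1 : lineNuDel G ↑T ≤ lineNu G := by
        apply csSup_le_csSup (bddNu _)
        · exact ⟨0, ∅, by simp⟩
        · rintro m ⟨M, hM, hd, rfl⟩
          exact ⟨M, fun A hA => ⟨(hM A hA).choose, (hM A hA).choose_spec.1⟩, hd, rfl⟩
      -- lineNu ≤ indepNum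
      have h2 : lineNu G ≤ indepNum G := by
        refine csSup_le ⟨0, ∅, by simp⟩ ?_
        rintro m ⟨M, hM, hd, rfl⟩
        set f : {A // A ∈ M} → V := fun A => (hM A.1 A.2).choose with hfdef
        have hf : ∀ A : {A // A ∈ M}, (A : Set (Sym2 V)) = G.incidenceSet (f A) :=
          fun A => (hM A.1 A.2).choose_spec
        have hfinj : Function.Injective f := by
          intro A B h
          exact Subtype.ext ((hf A).trans (h ▸ (hf B).symm))
        refine le_csSup bddI ⟨M.attach.image f, ?_, ?_⟩
        · intro u hu v hv hadj
          obtain ⟨A, -, rfl⟩ := Finset.mem_image.mp hu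
          obtain ⟨B, -, rfl⟩ := Finset.mem_image.mp hv
          have hAB : A.1 ≠ B.1 := by
            intro h
            exact (G.irrefl) (congrArg f (Subtype.ext h) ▸ hadj)
          have hdisj : Disjoint A.1 B.1 := hd A.2 B.2 hAB
          have he1 : s(f A, f B) ∈ A.1 := by
            rw [hf A]
            exact (hmem _ _).mpr ⟨G.mem_edgeSet.mpr hadj, by simp⟩
          have he2 : s(f A, f B) ∈ B.1 := by
            rw [hf B]
            exact (hmem _ _).mpr ⟨G.mem_edgeSet.mpr hadj, by simp⟩
          exact Set.disjoint_left.mp hdisj he1 he2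
        · rw [Finset.card_image_of_injective _ hfinj, Finset.card_attach]
      -- indepNum ≤ lineNuDel
      have h3 : indepNum G ≤ lineNuDel G ↑T := by
        rw [← hstable T hT hTcard]
        have hne : {m | ∃ I : Finset V, ↑I ⊆ {v : V | ∀ e ∈ T, v ∉ e} ∧
            (∀ u ∈ I, ∀ v ∈ I, ¬ G.Adj u v) ∧ I.card = m}.Nonempty := ⟨0, ∅, by simp⟩
        have hbdd : BddAbove {m | ∃ I : Finset V, ↑I ⊆ {v : V | ∀ e ∈ T, v ∉ e} ∧
            (∀ u ∈ I, ∀ v ∈ I, ¬ G.Adj u v) ∧ I.card = m} :=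
          ⟨Fintype.card V, by rintro m ⟨I, -, -, rfl⟩; exact I.card_le_univ⟩
        obtain ⟨I, hIsub, hIindep, hIcard⟩ := Nat.sSup_mem hne hbdd
        rw [indepNumOn, ← hIcard]
        refine le_csSup (bddNu _) ⟨I.image G.incidenceSet, ?_, ?_, ?_⟩
        · intro A hA
          obtain ⟨v, hv, rfl⟩ := Finset.mem_image.mp hA
          refine ⟨v, rfl, ?_⟩
          intro e he hcon
          exact (hIsub hv) e (by simpa using he) ((hmem v e).mp hcon).2
        · rintro A hA B hB hAB
          obtain ⟨u, hu, rfl⟩ := Finset.mem_image.mp (by simpa using hA)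
          obtain ⟨v, hv, rfl⟩ := Finset.mem_image.mp (by simpa using hB)
          rw [Set.disjoint_left]
          intro e he1 he2
          have hu' := (hmem u e).mp he1
          have hv' := (hmem v e).mp he2
          have huv : u ≠ v := fun h => hAB (by rw [h])
          induction e with
          | h a b =>
            rcases Sym2.mem_iff.mp hu'.2 with rfl | rfl
            · rcases Sym2.mem_iff.mp hv'.2 with rfl | rfl
              · exact huv rfl
              · exact hIindep u hu v hv (G.mem_edgeSet.mp hu'.1)
            · rcases Sym2.mem_iff.mp hv'.2 with rfl | rfl
              · exact hIindep u hu v hv (G.mem_edgeSet.mp hu'.1).symm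
              · exact huv rfl
        · exact Finset.card_image_of_injective _ hinc_inj
      omega
end

section
/- For every n ≥ 5, the independence number of the generalized Petersen graph GP(n,2) equals ⌊4n/5⌋. -/
/-- The generalized Petersen graph `GP(n,k)`: vertices `a_i = Sum.inl i` and
`b_i = Sum.inr i` for `i ∈ ℤ_n`, with edges `a_i b_i`, `a_i a_{i+1}`, `b_i b_{i+k}`. -/
def GP (n : ℕ) (k : ZMod n) : SimpleGraph (ZMod n ⊕ ZMod n) :=
  SimpleGraph.fromRel fun u v =>
    (∃ i, u = Sum.inl i ∧ v = Sum.inr i) ∨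
    (∃ i, u = Sum.inl i ∧ v = Sum.inl (i + 1)) ∨
    (∃ i, u = Sum.inr i ∧ v = Sum.inr (i + k))

def edges10 : List (ℕ × ℕ) := [(0,1),(1,2),(2,3),(3,4),(0,5),(1,6),(2,7),(3,8),(4,9),(5,7),(6,8),(7,9)]

set_option maxRecDepth 10000 in
lemma corebit : ∀ m : Fin 1024,
    (edges10.all fun e => !(m.val.testBit e.1 && m.val.testBit e.2)) = true →
    (List.range 10).countP (fun i => m.val.testBit i) ≤ 4 := by decide

def mask : List Bool → ℕ
  | [] => 0
  | b :: bs => (if b then 1 else 0) + 2 * mask bs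

lemma mask_lt : ∀ l : List Bool, mask l < 2 ^ l.length
  | [] => by simp [mask]
  | b :: bs => by
      have := mask_lt bs
      simp only [mask, List.length_cons, pow_succ]
      rcases b with _ | _ <;> simp <;> omega

lemma testBit_mask : ∀ (l : List Bool) (i : ℕ), (mask l).testBit i = l.getD i false
  | [], i => by simp [mask, Nat.zero_testBit]
  | b :: bs, 0 => by
      simp only [mask, Nat.testBit_zero, List.getD_cons_zero]
      rcases b with _ | _ <;> simp <;> omega
  | b :: bs, (i+1) => by
      have h2 : ((if b then 1 else 0) + 2 * mask bs) / 2 = mask bs := by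
        rcases b with _ | _ <;> simp <;> omega
      simp only [mask, Nat.testBit_succ, h2, List.getD_cons_succ]
      exact testBit_mask bs i

lemma coreFun (g : ℕ → Bool) (hE : ∀ p ∈ edges10, ¬(g p.1 = true ∧ g p.2 = true)) :
    (List.range 10).countP g ≤ 4 := by
  set l : List Bool := (List.range 10).map g with hl
  have hlen : l.length = 10 := by simp [hl]
  have hbit : ∀ i < 10, (mask l).testBit i = g i := by
    intro i hi
    rw [testBit_mask, List.getD_eq_getElem _ _ (by omega)]
    simp [hl]
  have hm : mask l < 1024 := by have := mask_lt l; rwa [hlen] at this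
  have := corebit ⟨mask l, hm⟩ ?_
  · calc (List.range 10).countP g
        = (List.range 10).countP (fun i => (mask l).testBit i) := by
          apply List.countP_congr
          intro i hi
          rw [List.mem_range] at hi
          rw [hbit i hi]
    _ ≤ 4 := this
  · rw [List.all_eq_true]
    intro p hp
    have h1 : p.1 < 10 ∧ p.2 < 10 := by fin_cases hp <;> simp
    have := hE p hp
    simp only [Bool.not_eq_true', Bool.and_eq_false_iff] at *
    rw [hbit p.1 h1.1, hbit p.2 h1.2]
    rcases Bool.eq_false_or_eq_true (g p.1) with h | h <;> simp_all

lemma card_filter_range_countP (k : ℕ) (p : ℕ → Prop) [DecidablePred p] :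
    ((Finset.range k).filter p).card = (List.range k).countP (fun j => decide (p j)) := by
  induction k with
  | zero => simp
  | succ k ih =>
    rw [Finset.range_add_one, Finset.filter_insert, List.range_succ, List.countP_append]
    by_cases h : p k
    · rw [if_pos h, Finset.card_insert_of_notMem (by simp)]
      simp [h, ih]
    · rw [if_neg h]
      simp [h, ih]

variable {n : ℕ}

lemma natCast_ne_zero (hn : 5 ≤ n) {c : ℕ} (h0 : 0 < c) (hc : c < n) : ((c : ℕ) : ZMod n) ≠ 0 := by
  haveI : NeZero n := ⟨by omega⟩
  intro h
  have := congrArg ZMod.val h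
  rw [ZMod.val_natCast, ZMod.val_zero, Nat.mod_eq_of_lt hc] at this
  omega

lemma adj_aa (hn : 5 ≤ n) (x : ZMod n) : (GP n 2).Adj (Sum.inl x) (Sum.inl (x + 1)) := by
  refine ⟨?_, Or.inl (Or.inr (Or.inl ⟨x, rfl, rfl⟩))⟩
  intro h
  have hx : x = x + 1 := Sum.inl.inj h
  have h2 : (1 : ZMod n) = 0 := by linear_combination -hx
  have := natCast_ne_zero hn (c := 1) (by norm_num) (by omega)
  rw [Nat.cast_one] at this
  exact this h2

lemma adj_ab (hn : 5 ≤ n) (x : ZMod n) : (GP n 2).Adj (Sum.inl x) (Sum.inr x) := by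
  exact ⟨by simp, Or.inl (Or.inl ⟨x, rfl, rfl⟩)⟩

lemma adj_bb (hn : 5 ≤ n) (x : ZMod n) : (GP n 2).Adj (Sum.inr x) (Sum.inr (x + 2)) := by
  refine ⟨?_, Or.inl (Or.inr (Or.inr ⟨x, rfl, rfl⟩))⟩
  intro h
  have hx : x = x + 2 := Sum.inr.inj h
  have h2 : (2 : ZMod n) = 0 := by linear_combination -hx
  have := natCast_ne_zero hn (c := 2) (by norm_num) (by omega)
  rw [Nat.cast_ofNat] at this
  exact this h2
def ψ (i : ZMod n) (j : ℕ) : ZMod n ⊕ ZMod n :=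
  if j < 5 then Sum.inl (i + (j : ℕ)) else Sum.inr (i + ((j - 5 : ℕ) : ℕ))

def W (i : ZMod n) : Finset (ZMod n ⊕ ZMod n) := (Finset.range 10).image (ψ i)

lemma key_aa (hn : 5 ≤ n) (i : ZMod n) (j : ℕ) (h : j + 1 < 5) :
    (GP n 2).Adj (ψ i j) (ψ i (j+1)) := by
  rw [ψ, if_pos (by omega : j < 5), ψ, if_pos h]
  have he : i + ((j+1 : ℕ) : ZMod n) = (i + (j : ℕ)) + 1 := by push_cast; ring
  rw [he]
  exact adj_aa hn _

lemma key_ab (hn : 5 ≤ n) (i : ZMod n) (j : ℕ) (h : j < 5) :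
    (GP n 2).Adj (ψ i j) (ψ i (j+5)) := by
  rw [ψ, if_pos h, ψ, if_neg (by omega)]
  have : j + 5 - 5 = j := by omega
  rw [this]
  exact adj_ab hn _

lemma key_bb (hn : 5 ≤ n) (i : ZMod n) (j : ℕ) (h : j + 7 < 10) :
    (GP n 2).Adj (ψ i (j+5)) (ψ i (j+7)) := by
  rw [ψ, if_neg (by omega), ψ, if_neg (by omega)]
  have h1 : j + 5 - 5 = j := by omega
  have h2 : j + 7 - 5 = j + 2 := by omega
  rw [h1, h2]
  have he : i + ((j+2 : ℕ) : ZMod n) = (i + (j : ℕ)) + 2 := by push_cast; ring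
  rw [he]
  exact adj_bb hn _

lemma window_bound (hn : 5 ≤ n) (I : Finset (ZMod n ⊕ ZMod n))
    (hI : ∀ u ∈ I, ∀ v ∈ I, ¬ (GP n 2).Adj u v) (i : ZMod n) : (I ∩ W i).card ≤ 4 := by
  classical
  have key : ∀ p ∈ edges10,
      (GP n 2).Adj (ψ i p.1) (ψ i p.2) := by
    intro p hp
    fin_cases hp
    · exact key_aa hn i 0 (by norm_num)
    · exact key_aa hn i 1 (by norm_num)
    · exact key_aa hn i 2 (by norm_num)
    · exact key_aa hn i 3 (by norm_num)
    · exact key_ab hn i 0 (by norm_num)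
    · exact key_ab hn i 1 (by norm_num)
    · exact key_ab hn i 2 (by norm_num)
    · exact key_ab hn i 3 (by norm_num)
    · exact key_ab hn i 4 (by norm_num)
    · exact key_bb hn i 0 (by norm_num)
    · exact key_bb hn i 1 (by norm_num)
    · exact key_bb hn i 2 (by norm_num)
  have h1 : I ∩ W i ⊆ ((Finset.range 10).filter (fun j => ψ i j ∈ I)).image (ψ i) := by
    intro v hv
    rw [Finset.mem_inter] at hv
    obtain ⟨hvI, hvW⟩ := hv
    rw [W, Finset.mem_image] at hvW
    obtain ⟨j, hj, hje⟩ := hvW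
    exact Finset.mem_image.2 ⟨j, Finset.mem_filter.2 ⟨hj, by rwa [hje]⟩, hje⟩
  calc (I ∩ W i).card ≤ ((Finset.range 10).filter (fun j => ψ i j ∈ I)).card :=
        le_trans (Finset.card_le_card h1) Finset.card_image_le
    _ = (List.range 10).countP (fun j => decide (ψ i j ∈ I)) := card_filter_range_countP _ _
    _ ≤ 4 := by
        apply coreFun
        intro p hp h
        obtain ⟨h1', h2'⟩ := h
        rw [decide_eq_true_eq] at h1' h2'
        exact hI _ h1' _ h2' (key p hp)

lemma card_sub_image (hn : 5 ≤ n) (x : ZMod n) :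
    ((Finset.range 5).image (fun j => x - (j:ℕ))).card = 5 := by
  haveI : NeZero n := ⟨by omega⟩
  rw [Finset.card_image_of_injOn, Finset.card_range]
  intro j1 h1 j2 h2 heq
  rw [Finset.mem_coe, Finset.mem_range] at h1 h2
  have : ((j1:ℕ) : ZMod n) = ((j2:ℕ) : ZMod n) := by
    have := sub_right_inj.mp heq
    exact this
  have := congrArg ZMod.val this
  rwa [ZMod.val_natCast, ZMod.val_natCast, Nat.mod_eq_of_lt (by omega), Nat.mod_eq_of_lt (by omega)] at this

lemma fiber (hn : 5 ≤ n) [NeZero n] (v : ZMod n ⊕ ZMod n) :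
    (Finset.univ.filter (fun i : ZMod n => v ∈ W i)).card = 5 := by
  obtain x | x := v
  · have : (Finset.univ.filter (fun i : ZMod n => Sum.inl x ∈ W i))
        = (Finset.range 5).image (fun j => x - (j:ℕ)) := by
      ext i
      simp only [Finset.mem_filter, Finset.mem_univ, true_and, W, Finset.mem_image,
        Finset.mem_range]
      constructor
      · rintro ⟨j, hj, hψ⟩
        by_cases hj5 : j < 5
        · rw [ψ, if_pos hj5] at hψ
          have : i + (j:ℕ) = x := Sum.inl.inj hψ
          exact ⟨j, hj5, by rw [← this]; ring⟩
        · rw [ψ, if_neg hj5] at hψ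
          exact absurd hψ (by simp)
      · rintro ⟨j, hj5, rfl⟩
        refine ⟨j, by omega, ?_⟩
        rw [ψ, if_pos hj5]
        have hxx : x - (j:ℕ) + (j:ℕ) = x := by ring
        rw [hxx]
    rw [this, card_sub_image hn]
  · have : (Finset.univ.filter (fun i : ZMod n => Sum.inr x ∈ W i))
        = (Finset.range 5).image (fun j => x - (j:ℕ)) := by
      ext i
      simp only [Finset.mem_filter, Finset.mem_univ, true_and, W, Finset.mem_image,
        Finset.mem_range]
      constructor
      · rintro ⟨j, hj, hψ⟩
        by_cases hj5 : j < 5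
        · rw [ψ, if_pos hj5] at hψ
          exact absurd hψ (by simp)
        · rw [ψ, if_neg hj5] at hψ
          have : i + ((j - 5 : ℕ):ZMod n) = x := Sum.inr.inj hψ
          exact ⟨j - 5, by omega, by rw [← this]; ring⟩
      · rintro ⟨j, hj5, rfl⟩
        refine ⟨j + 5, by omega, ?_⟩
        rw [ψ, if_neg (by omega)]
        have : j + 5 - 5 = j := by omega
        rw [this]
        have hxx : x - (j:ℕ) + (j:ℕ) = x := by ring
        rw [hxx]
    rw [this, card_sub_image hn]

lemma upper (hn : 5 ≤ n) (I : Finset (ZMod n ⊕ ZMod n))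
    (hI : ∀ u ∈ I, ∀ v ∈ I, ¬ (GP n 2).Adj u v) : I.card ≤ 4 * n / 5 := by
  classical
  haveI : NeZero n := ⟨by omega⟩
  have h1 : ∑ i : ZMod n, (I ∩ W i).card ≤ 4 * n := by
    calc ∑ i : ZMod n, (I ∩ W i).card ≤ ∑ _i : ZMod n, 4 :=
          Finset.sum_le_sum (fun i _ => window_bound hn I hI i)
      _ = 4 * n := by rw [Finset.sum_const, Finset.card_univ, ZMod.card, smul_eq_mul]; ring
  have h2 : ∑ i : ZMod n, (I ∩ W i).card = 5 * I.card := by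
    have step : ∀ i : ZMod n, (I ∩ W i).card = ∑ v ∈ I, if v ∈ W i then 1 else 0 := by
      intro i
      have : I ∩ W i = I.filter (· ∈ W i) := by
        ext v
        simp [Finset.mem_filter, Finset.mem_inter]
      rw [this, Finset.card_filter]
    calc ∑ i : ZMod n, (I ∩ W i).card
        = ∑ i : ZMod n, ∑ v ∈ I, if v ∈ W i then 1 else 0 := by
          exact Finset.sum_congr rfl (fun i _ => step i)
      _ = ∑ v ∈ I, ∑ i : ZMod n, if v ∈ W i then 1 else 0 := Finset.sum_comm
      _ = ∑ v ∈ I, (Finset.univ.filter (fun i : ZMod n => v ∈ W i)).card := by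
          exact Finset.sum_congr rfl (fun v _ => (Finset.card_filter _ _).symm)
      _ = ∑ _v ∈ I, 5 := Finset.sum_congr rfl (fun v _ => fiber hn v)
      _ = 5 * I.card := by rw [Finset.sum_const, smul_eq_mul]; ring
  rw [h2] at h1
  omega

lemma count_mod5 (m c : ℕ) (hc : c < 5) :
    ((Finset.range m).filter (fun i => i % 5 = c)).card = (m + 4 - c) / 5 := by
  induction m with
  | zero => simp; omega
  | succ m ih =>
    rw [Finset.range_add_one, Finset.filter_insert]
    by_cases h : m % 5 = c
    · rw [if_pos h, Finset.card_insert_of_notMem (by simp), ih]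
      omega
    · rw [if_neg h, ih]
      omega

lemma cast_inj_lt (hx : x < n) (hy : y < n) (h : (x : ZMod n) = (y : ZMod n)) : x = y := by
  haveI : NeZero n := ⟨by omega⟩
  have := congrArg ZMod.val h
  rwa [ZMod.val_natCast, ZMod.val_natCast, Nat.mod_eq_of_lt hx, Nat.mod_eq_of_lt hy] at this

lemma decode (hn : 5 ≤ n) {x y c : ℕ} (hx : x < n) (hy : y < n) (hc : c < n)
    (h : (x : ZMod n) + (c : ℕ) = (y : ZMod n)) : y = x + c ∨ y + n = x + c := by
  haveI : NeZero n := ⟨by omega⟩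
  have h2 : (((x + c : ℕ)) : ZMod n) = (y : ℕ) := by push_cast; exact h
  have h3 := congrArg ZMod.val h2
  rw [ZMod.val_natCast, ZMod.val_natCast, Nat.mod_eq_of_lt hy] at h3
  rcases Nat.lt_or_ge (x + c) n with h' | h'
  · left; rw [Nat.mod_eq_of_lt h'] at h3; omega
  · right
    rw [Nat.mod_eq_sub_mod h', Nat.mod_eq_of_lt (by omega)] at h3
    omega

lemma adj_cases {u v : ZMod n ⊕ ZMod n} (h : (GP n 2).Adj u v) :
    (∃ x, (u = Sum.inl x ∧ v = Sum.inr x) ∨ (v = Sum.inl x ∧ u = Sum.inr x)) ∨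
    (∃ x, (u = Sum.inl x ∧ v = Sum.inl (x+1)) ∨ (v = Sum.inl x ∧ u = Sum.inl (x+1))) ∨
    (∃ x, (u = Sum.inr x ∧ v = Sum.inr (x+2)) ∨ (v = Sum.inr x ∧ u = Sum.inr (x+2))) := by
  rw [GP, SimpleGraph.fromRel_adj] at h
  obtain ⟨-, h | h⟩ := h
  · rcases h with ⟨x, h1, h2⟩ | ⟨x, h1, h2⟩ | ⟨x, h1, h2⟩
    · exact Or.inl ⟨x, Or.inl ⟨h1, h2⟩⟩
    · exact Or.inr (Or.inl ⟨x, Or.inl ⟨h1, h2⟩⟩)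
    · exact Or.inr (Or.inr ⟨x, Or.inl ⟨h1, h2⟩⟩)
  · rcases h with ⟨x, h1, h2⟩ | ⟨x, h1, h2⟩ | ⟨x, h1, h2⟩
    · exact Or.inl ⟨x, Or.inr ⟨h1, h2⟩⟩
    · exact Or.inr (Or.inl ⟨x, Or.inr ⟨h1, h2⟩⟩)
    · exact Or.inr (Or.inr ⟨x, Or.inr ⟨h1, h2⟩⟩)

def Aidx (n : ℕ) : Finset ℕ := (Finset.range (n-1)).filter (fun i => i % 5 = 0 ∨ i % 5 = 2)

def Bidx (n : ℕ) : Finset ℕ :=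
  (Finset.range n).filter (fun i => i % 5 = 3 ∨ i % 5 = 4 ∨ (n % 5 = 3 ∧ i = n - 1))

def Sset (n : ℕ) : Finset (ZMod n ⊕ ZMod n) :=
  (Aidx n).image (fun i : ℕ => Sum.inl (Nat.cast i : ZMod n)) ∪
    (Bidx n).image (fun i : ℕ => Sum.inr (Nat.cast i : ZMod n))

lemma mem_Sset {v : ZMod n ⊕ ZMod n} (h : v ∈ Sset n) :
    (∃ i ∈ Aidx n, v = Sum.inl (Nat.cast i : ZMod n)) ∨
      (∃ i ∈ Bidx n, v = Sum.inr (Nat.cast i : ZMod n)) := by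
  rw [Sset, Finset.mem_union, Finset.mem_image, Finset.mem_image] at h
  rcases h with ⟨i, hi, rfl⟩ | ⟨i, hi, rfl⟩
  · exact Or.inl ⟨i, hi, rfl⟩
  · exact Or.inr ⟨i, hi, rfl⟩

lemma Sset_indep (hn : 5 ≤ n) :
    ∀ u ∈ Sset n, ∀ v ∈ Sset n, ¬ (GP n 2).Adj u v := by
  intro u hu v hv hadj
  have hAfact : ∀ i ∈ Aidx n, i < n - 1 ∧ (i % 5 = 0 ∨ i % 5 = 2) := by
    intro i hi; rw [Aidx, Finset.mem_filter, Finset.mem_range] at hi; exact hi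
  have hBfact : ∀ i ∈ Bidx n, i < n ∧ (i % 5 = 3 ∨ i % 5 = 4 ∨ (n % 5 = 3 ∧ i = n - 1)) := by
    intro i hi; rw [Bidx, Finset.mem_filter, Finset.mem_range] at hi; exact hi
  rcases mem_Sset hu with ⟨i, hi, rfl⟩ | ⟨i, hi, rfl⟩ <;>
    rcases mem_Sset hv with ⟨j, hj, rfl⟩ | ⟨j, hj, rfl⟩ <;>
    rcases adj_cases hadj with ⟨x, ⟨h1, h2⟩ | ⟨h1, h2⟩⟩ | ⟨x, ⟨h1, h2⟩ | ⟨h1, h2⟩⟩ |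
      ⟨x, ⟨h1, h2⟩ | ⟨h1, h2⟩⟩ <;>
    simp only [Sum.inl.injEq, Sum.inr.injEq, reduceCtorEq] at h1 h2
  -- (A,A) aa orientation 1 : j ≡ i + 1
  · obtain ⟨hi1, hi2⟩ := hAfact i hi
    obtain ⟨hj1, hj2⟩ := hAfact j hj
    have hd := decode hn (x := i) (y := j) (c := 1) (by omega) (by omega) (by omega)
      (by rw [h1, h2]; push_cast; ring)
    omega
  -- (A,A) aa orientation 2 : i ≡ j + 1
  · obtain ⟨hi1, hi2⟩ := hAfact i hi
    obtain ⟨hj1, hj2⟩ := hAfact j hj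
    have hd := decode hn (x := j) (y := i) (c := 1) (by omega) (by omega) (by omega)
      (by rw [h1, h2]; push_cast; ring)
    omega
  -- (A,B) spoke : i = j
  · obtain ⟨hi1, hi2⟩ := hAfact i hi
    obtain ⟨hj1, hj2⟩ := hBfact j hj
    have := cast_inj_lt (show i < n by omega) (show j < n by omega) (h1.trans h2.symm)
    omega
  -- (B,A) spoke : j = i
  · obtain ⟨hi1, hi2⟩ := hBfact i hi
    obtain ⟨hj1, hj2⟩ := hAfact j hj
    have := cast_inj_lt (show j < n by omega) (show i < n by omega) (h1.trans h2.symm)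
    omega
  -- (B,B) bb orientation 1 : j ≡ i + 2
  · obtain ⟨hi1, hi2⟩ := hBfact i hi
    obtain ⟨hj1, hj2⟩ := hBfact j hj
    have hd := decode hn (x := i) (y := j) (c := 2) (by omega) (by omega) (by omega)
      (by rw [h1, h2]; push_cast; ring)
    omega
  -- (B,B) bb orientation 2 : i ≡ j + 2
  · obtain ⟨hi1, hi2⟩ := hBfact i hi
    obtain ⟨hj1, hj2⟩ := hBfact j hj
    have hd := decode hn (x := j) (y := i) (c := 2) (by omega) (by omega) (by omega)
      (by rw [h1, h2]; push_cast; ring)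
    omega

lemma Aidx_card (hn : 5 ≤ n) : (Aidx n).card = (n + 3) / 5 + (n + 1) / 5 := by
  rw [Aidx, Finset.filter_or, Finset.card_union_of_disjoint]
  · rw [count_mod5 _ 0 (by norm_num), count_mod5 _ 2 (by norm_num)]
    omega
  · rw [Finset.disjoint_left]
    intro a ha hb
    rw [Finset.mem_filter] at ha hb
    omega

lemma Bidx_card (hn : 5 ≤ n) :
    (Bidx n).card = (n + 1) / 5 + n / 5 + (if n % 5 = 3 then 1 else 0) := by
  have hthird : (Finset.range n).filter (fun i => n % 5 = 3 ∧ i = n - 1)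
      = if n % 5 = 3 then {n - 1} else ∅ := by
    by_cases h3 : n % 5 = 3
    · rw [if_pos h3]
      ext a
      rw [Finset.mem_filter, Finset.mem_range, Finset.mem_singleton]
      constructor
      · rintro ⟨-, -, h⟩; exact h
      · rintro rfl; exact ⟨by omega, h3, rfl⟩
    · rw [if_neg h3]
      ext a
      rw [Finset.mem_filter, Finset.mem_range]
      simp [h3]
  have h1 : (Bidx n) = ((Finset.range n).filter (fun i => i % 5 = 3))
      ∪ (((Finset.range n).filter (fun i => i % 5 = 4))
        ∪ ((Finset.range n).filter (fun i => n % 5 = 3 ∧ i = n - 1))) := by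
    rw [Bidx, Finset.filter_or, Finset.filter_or]
  rw [h1, Finset.card_union_of_disjoint, Finset.card_union_of_disjoint]
  · rw [count_mod5 _ 3 (by norm_num), count_mod5 _ 4 (by norm_num), hthird]
    by_cases h3 : n % 5 = 3
    · rw [if_pos h3, if_pos h3]
      simp only [Finset.card_singleton]
      omega
    · rw [if_neg h3, if_neg h3]
      simp only [Finset.card_empty]
      omega
  · rw [Finset.disjoint_left]
    intro a ha hb
    rw [Finset.mem_filter] at ha hb
    obtain ⟨ha1, ha2⟩ := ha
    obtain ⟨hb1, hb2, hb3⟩ := hb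
    rw [Finset.mem_range] at ha1
    omega
  · rw [Finset.disjoint_left]
    intro a ha hb
    rw [Finset.mem_union, Finset.mem_filter, Finset.mem_filter] at hb
    rw [Finset.mem_filter, Finset.mem_range] at ha
    rcases hb with ⟨-, hb⟩ | ⟨-, hb1, hb2⟩ <;> omega

lemma Sset_card (hn : 5 ≤ n) : (Sset n).card = 4 * n / 5 := by
  have hinjA : Set.InjOn (fun i : ℕ => (Sum.inl (Nat.cast i : ZMod n) : ZMod n ⊕ ZMod n)) (Aidx n) := by
    intro a ha b hb hab
    rw [Finset.mem_coe, Aidx, Finset.mem_filter, Finset.mem_range] at ha hb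
    exact cast_inj_lt (by omega) (by omega) (Sum.inl.inj hab)
  have hinjB : Set.InjOn (fun i : ℕ => (Sum.inr (Nat.cast i : ZMod n) : ZMod n ⊕ ZMod n)) (Bidx n) := by
    intro a ha b hb hab
    rw [Finset.mem_coe, Bidx, Finset.mem_filter, Finset.mem_range] at ha hb
    exact cast_inj_lt (by omega) (by omega) (Sum.inr.inj hab)
  rw [Sset, Finset.card_union_of_disjoint, Finset.card_image_of_injOn hinjA,
    Finset.card_image_of_injOn hinjB, Aidx_card hn, Bidx_card hn]
  · by_cases h3 : n % 5 = 3
    · rw [if_pos h3]; omega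
    · rw [if_neg h3]
      have h4 : n % 5 = 0 ∨ n % 5 = 1 ∨ n % 5 = 2 ∨ n % 5 = 4 := by omega
      omega
  · rw [Finset.disjoint_left]
    intro a ha hb
    rw [Finset.mem_image] at ha hb
    obtain ⟨x, -, rfl⟩ := ha
    obtain ⟨y, -, hy⟩ := hb
    exact absurd hy (by simp)

/-- For every `n ≥ 5`, the independence number of `GP(n,2)` equals `⌊4n/5⌋`. -/
theorem indepNum_GP_n_2 (n : ℕ) (hn : 5 ≤ n) :
    indepNum (GP n 2) = 4 * n / 5 := by
  rw [indepNum]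
  have hmem : 4 * n / 5 ∈ {m | ∃ I : Finset (ZMod n ⊕ ZMod n),
      (∀ u ∈ I, ∀ v ∈ I, ¬ (GP n 2).Adj u v) ∧ I.card = m} :=
    ⟨Sset n, Sset_indep hn, Sset_card hn⟩
  have hub : ∀ m ∈ {m | ∃ I : Finset (ZMod n ⊕ ZMod n),
      (∀ u ∈ I, ∀ v ∈ I, ¬ (GP n 2).Adj u v) ∧ I.card = m}, m ≤ 4 * n / 5 := by
    rintro m ⟨I, hI, rfl⟩
    exact upper hn I hI
  exact le_antisymm (csSup_le ⟨_, hmem⟩ hub) (le_csSup ⟨_, hub⟩ hmem)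
end

section
/- For every n ≥ 5 and every i ∈ ℤ_n, any independent set of GP(n,2) contains at most 4 vertices among the 10 vertices of the 5 consecutive rungs R_i, R_{i+1}, R_{i+2}, R_{i+3}, R_{i+4}. -/
/-- The `i`-th rung `R_i = {a_i, b_i}` of `GP(n,k)`. -/
def rung (n : ℕ) (i : ZMod n) : Finset (ZMod n ⊕ ZMod n) :=
  {Sum.inl i, Sum.inr i}

/-- `S_{i,ℓ}`: the union of the `ℓ` consecutive rungs `R_i, …, R_{i+ℓ-1}`. -/
def rungs (n : ℕ) (i : ZMod n) (l : ℕ) : Finset (ZMod n ⊕ ZMod n) :=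
  (Finset.range l).biUnion fun t => rung n (i + (t : ZMod n))

set_option maxRecDepth 100000 in
/-- Combinatorial core on `Fin 5`: if `A` has no two "consecutive" elements,
`B` has no two elements at distance `2`, and `A`, `B` are disjoint, then
`|A| + |B| ≤ 4`. -/
lemma fin5_core : ∀ A B : Finset (Fin 5),
    (∀ s ∈ A, ∀ t ∈ A, t.val ≠ s.val + 1) →
    (∀ s ∈ B, ∀ t ∈ B, t.val ≠ s.val + 2) →
    (∀ s ∈ A, s ∉ B) → A.card + B.card ≤ 4 := by decide

/-- For `n ≥ 5` and any `i ∈ ℤ_n`, every independent set of `GP(n,2)` contains at most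
`4` vertices among the `5` consecutive rungs `R_i, …, R_{i+4}`. -/
theorem indep_inter_five_rungs_le_four (n : ℕ) (hn : 5 ≤ n) (i : ZMod n)
    (I : Finset (ZMod n ⊕ ZMod n))
    (hI : ∀ u ∈ I, ∀ v ∈ I, ¬ (GP n 2).Adj u v) :
    (I ∩ rungs n i 5).card ≤ 4 := by
  haveI : NeZero n := ⟨by omega⟩
  have hcast : ∀ s t : Fin 5, ((s.val : ZMod n) = (t.val : ZMod n)) → s = t := by
    intro s t h
    have hs := s.isLt
    have ht := t.isLt
    have : s.val = t.val := by
      have := congrArg ZMod.val h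
      rwa [ZMod.val_natCast_of_lt (by omega), ZMod.val_natCast_of_lt (by omega)] at this
    exact Fin.ext this
  set A : Finset (Fin 5) :=
    Finset.univ.filter (fun t => Sum.inl (i + (t.val : ZMod n)) ∈ I) with hA
  set B : Finset (Fin 5) :=
    Finset.univ.filter (fun t => Sum.inr (i + (t.val : ZMod n)) ∈ I) with hB
  -- the three independence-derived conditions
  have hAcond : ∀ s ∈ A, ∀ t ∈ A, t.val ≠ s.val + 1 := by
    intro s hs t ht hst
    simp only [hA, Finset.mem_filter] at hs ht
    refine hI _ hs.2 _ ht.2 ?_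
    rw [GP, SimpleGraph.fromRel_adj]
    refine ⟨?_, Or.inl (Or.inr (Or.inl ⟨i + (s.val : ZMod n), rfl, ?_⟩))⟩
    · intro h
      have := hcast _ _ (add_left_cancel (Sum.inl.inj h))
      subst this
      omega
    · congr 1
      rw [hst]; push_cast; ring
  have hBcond : ∀ s ∈ B, ∀ t ∈ B, t.val ≠ s.val + 2 := by
    intro s hs t ht hst
    simp only [hB, Finset.mem_filter] at hs ht
    refine hI _ hs.2 _ ht.2 ?_
    rw [GP, SimpleGraph.fromRel_adj]
    refine ⟨?_, Or.inl (Or.inr (Or.inr ⟨i + (s.val : ZMod n), rfl, ?_⟩))⟩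
    · intro h
      have := hcast _ _ (add_left_cancel (Sum.inr.inj h))
      subst this
      omega
    · congr 1
      rw [hst]; push_cast; ring
  have hABdisj : ∀ s ∈ A, s ∉ B := by
    intro s hs hsB
    simp only [hA, Finset.mem_filter] at hs
    simp only [hB, Finset.mem_filter] at hsB
    refine hI _ hs.2 _ hsB.2 ?_
    rw [GP, SimpleGraph.fromRel_adj]
    exact ⟨by simp, Or.inl (Or.inl ⟨_, rfl, rfl⟩)⟩
  have hsub : I ∩ rungs n i 5 ⊆
      A.image (fun t => Sum.inl (i + (t.val : ZMod n))) ∪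
      B.image (fun t => Sum.inr (i + (t.val : ZMod n))) := by
    intro x hx
    rw [Finset.mem_inter] at hx
    obtain ⟨hxI, hxr⟩ := hx
    simp only [rungs, rung, Finset.mem_biUnion, Finset.mem_range, Finset.mem_insert,
      Finset.mem_singleton] at hxr
    obtain ⟨t, ht, hx⟩ := hxr
    have hv : ((⟨t, ht⟩ : Fin 5).val : ZMod n) = (t : ZMod n) := rfl
    rcases hx with hx | hx
    · refine Finset.mem_union_left _ (Finset.mem_image.2 ⟨⟨t, ht⟩, ?_, by rw [hv, ← hx]⟩)
      simp only [hA, Finset.mem_filter, Finset.mem_univ, true_and, hv, ← hx]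
      exact hxI
    · refine Finset.mem_union_right _ (Finset.mem_image.2 ⟨⟨t, ht⟩, ?_, by rw [hv, ← hx]⟩)
      simp only [hB, Finset.mem_filter, Finset.mem_univ, true_and, hv, ← hx]
      exact hxI
  calc (I ∩ rungs n i 5).card
      ≤ (A.image (fun t => Sum.inl (i + (t.val : ZMod n))) ∪
         B.image (fun t => Sum.inr (i + (t.val : ZMod n)))).card :=
        Finset.card_le_card hsub
    _ ≤ (A.image (fun t => Sum.inl (i + (t.val : ZMod n)))).card +
        (B.image (fun t => Sum.inr (i + (t.val : ZMod n)))).card :=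
        Finset.card_union_le _ _
    _ ≤ A.card + B.card :=
        Nat.add_le_add Finset.card_image_le Finset.card_image_le
    _ ≤ 4 := fin5_core A B hAcond hBcond hABdisj
end

section
/- If k and n are coprime, then GP(n,k) is isomorphic to the cycle permutation graph CyP(n, α) where α is the permutation of ℤ_n given by α(x) = kx. -/
/-- The permutation graph `P(G, α)`: two disjoint copies of `G` (on `false × V` and
`true × V`), with each vertex `(false, v)` joined to `(true, α v)`. -/
def PermGraph {V : Type*} (G : SimpleGraph V) (α : Equiv.Perm V) :
    SimpleGraph (Bool × V) :=
  SimpleGraph.fromRel fun p q =>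
    (p.1 = q.1 ∧ G.Adj p.2 q.2) ∨ (p.1 = false ∧ q.1 = true ∧ q.2 = α p.2)

/-- The cycle on vertex set `ℤ_n` with `i` adjacent to `i + 1`. -/
def cycGraph (n : ℕ) : SimpleGraph (ZMod n) :=
  SimpleGraph.fromRel fun i j => j = i + 1

/-- If `k` and `n` are coprime, then `GP(n,k)` is isomorphic to the cycle permutation
graph `CyP(n, α)` with `α(x) = kx`. -/
theorem GP_iso_cyclePermGraph (n : ℕ) (hn : 3 ≤ n) (k : ℕ) (hcop : Nat.Coprime k n)
    (α : Equiv.Perm (ZMod n)) (hα : ∀ x : ZMod n, α x = (k : ZMod n) * x) :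
    Nonempty (GP n (k : ZMod n) ≃g PermGraph (cycGraph n) α) := by
  haveI : NeZero n := ⟨by omega⟩
  have hk : IsUnit ((k : ZMod n)) := (ZMod.isUnit_iff_coprime k n).2 hcop
  have hki : (k : ZMod n)⁻¹ * k = 1 := ZMod.inv_mul_of_unit _ hk
  have hik : (k : ZMod n) * (k : ZMod n)⁻¹ = 1 := ZMod.mul_inv_of_unit _ hk
  refine ⟨⟨⟨fun x => match x with
      | Sum.inl i => (true, i)
      | Sum.inr i => (false, (k : ZMod n)⁻¹ * i),
    fun p => match p with
      | (true, v) => Sum.inl v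
      | (false, v) => Sum.inr ((k : ZMod n) * v), ?_, ?_⟩, ?_⟩⟩
  · rintro (i | i)
    · rfl
    · simp only
      rw [← mul_assoc, hik, one_mul]
  · rintro ⟨(_ | _), v⟩
    · simp only
      rw [← mul_assoc, hki, one_mul]
    · rfl
  · rintro (i | i) (j | j) <;>
      simp only [GP, PermGraph, cycGraph, SimpleGraph.fromRel_adj, Equiv.coe_fn_mk,
        hα, ne_eq, Prod.mk.injEq, Sum.inl.injEq, Sum.inr.injEq, reduceCtorEq,
        Sum.inl.injEq, and_true, true_and, false_and, and_false, or_false, false_or,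
        exists_eq_left', exists_and_left, Sum.exists] <;>
      first
      | (intro h; exact h)
      | (have hcan : ∀ x : ZMod n, (k : ZMod n) * ((k : ZMod n)⁻¹ * x) = x := by
           intro x; rw [← mul_assoc, hik, one_mul]
         have hinj : ∀ x y : ZMod n,
             ((k : ZMod n)⁻¹ * x = (k : ZMod n)⁻¹ * y) ↔ x = y := by
           intro x y
           constructor
           · intro h; have := congrArg (fun z => (k : ZMod n) * z) h
             simpa [hcan] using this
           · rintro rfl; rfl
         have hadd : ∀ x : ZMod n,
             (k : ZMod n)⁻¹ * (x + k) = (k : ZMod n)⁻¹ * x + 1 := by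
           intro x; rw [mul_add, hki]
         constructor <;>
           (intro h;
            simp only [hcan, ← hadd, hinj, exists_false, or_false, false_or,
              eq_comm] at h ⊢ <;> tauto))
end
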